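/- Let H be the graph constructed from G and ℓ, with target sets X and Y of size ℓ. Then there exists a reconfiguration sequence 𝒮 from X to Y in H consisting only of subsets of V ∪ X ∪ Y ∪ A ∪ B and satisfying ‖𝒮‖ = opt_H(X ⇝ Y); in particular, no target set in 𝒮 contains any internal vertex of the one-way gadgets of H. -/

import Mathlib

namespace TSS

variable {V : Type*}

/-- The set of active vertices after `i` steps of the activation process started from `S`. -/
def activeAt (G : SimpleGraph V) (τ : V → ℕ) (S : Set V) : ℕ → Set V
  | 0 => S
  | i + 1 => activeAt G τ S i ∪ { v | τ v ≤ (G.neighborSet v ∩ activeAt G τ S i).ncard }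

/-- The active vertex set `𝒜(S) = ⋃ i, 𝒜ⁱ(S)`. -/
def activeSet (G : SimpleGraph V) (τ : V → ℕ) (S : Set V) : Set V :=
  ⋃ i, activeAt G τ S i

/-- `S` is a target set for `(G, τ)` if it activates every vertex. -/
def IsTargetSet (G : SimpleGraph V) (τ : V → ℕ) (S : Set V) : Prop :=
  activeSet G τ S = Set.univ

/-- Minimum size of a target set. -/
noncomputable def optTS (G : SimpleGraph V) (τ : V → ℕ) : ℕ :=
  sInf { m | ∃ S : Set V, IsTargetSet G τ S ∧ S.ncard = m }

/-- A reconfiguration sequence `Sfam 0 = X, …, Sfam T = Y` of target sets where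
consecutive sets differ in exactly one vertex. -/
structure IsReconfSeq (G : SimpleGraph V) (τ : V → ℕ) (X Y : Set V) (T : ℕ)
    (Sfam : ℕ → Set V) : Prop where
  head : Sfam 0 = X
  last : Sfam T = Y
  target : ∀ t ≤ T, IsTargetSet G τ (Sfam t)
  step : ∀ t < T, (symmDiff (Sfam t) (Sfam (t + 1))).ncard = 1

/-- The size of a reconfiguration sequence: maximum cardinality of any member. -/
noncomputable def seqSize (T : ℕ) (Sfam : ℕ → Set V) : ℕ :=
  (Finset.range (T + 1)).sup fun t => (Sfam t).ncard

/-- `opt_G(X ⇝ Y)`: minimum size over all reconfiguration sequences from `X` to `Y`. -/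
noncomputable def optReconf (G : SimpleGraph V) (τ : V → ℕ) (X Y : Set V) : ℕ :=
  sInf { m | ∃ T Sfam, IsReconfSeq G τ X Y T Sfam ∧ seqSize T Sfam = m }

/-- The four internal vertices of a one-way gadget. -/
inductive GadVert where | t | h | b1 | b2

/-- Index set of the one-way gadgets of the graph `H` built from `G` (with degree
function `d`) and `ℓ`. -/
inductive GadIdx (V : Type*) (ℓ : ℕ) (d : V → ℕ) where
  | vx (v : V) (i : Fin ℓ)
  | xa (i : Fin ℓ) (v : V) (j : Fin (d v))
  | av (v : V) (j : Fin (d v))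
  | vy (v : V) (i : Fin ℓ)
  | yb (i : Fin ℓ) (v : V) (j : Fin (d v))
  | bv (v : V) (j : Fin (d v))

/-- Vertices of the graph `H`: a copy of `V`, the sets `X`, `Y`, `A`, `B`, and the
internal vertices of all one-way gadgets. -/
inductive HVert (V : Type*) (ℓ : ℕ) (d : V → ℕ) where
  | orig (v : V)
  | xx (i : Fin ℓ)
  | yy (i : Fin ℓ)
  | aa (v : V) (j : Fin (d v))
  | bb (v : V) (j : Fin (d v))
  | gad (D : GadIdx V ℓ d) (w : GadVert)

variable {ℓ : ℕ} {d : V → ℕ}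

/-- The tail of a one-way gadget. -/
def gadTail : GadIdx V ℓ d → HVert V ℓ d
  | .vx v _ => .orig v
  | .xa i _ _ => .xx i
  | .av v j => .aa v j
  | .vy v _ => .orig v
  | .yb i _ _ => .yy i
  | .bv v j => .bb v j

/-- The head of a one-way gadget. -/
def gadHead : GadIdx V ℓ d → HVert V ℓ d
  | .vx _ i => .xx i
  | .xa _ v j => .aa v j
  | .av v _ => .orig v
  | .vy _ i => .yy i
  | .yb _ v j => .bb v j
  | .bv v _ => .orig v

/-- Base edge relation of the graph `H`. -/
def HRel (G : SimpleGraph V) (ℓ : ℕ) (d : V → ℕ) : HVert V ℓ d → HVert V ℓ d → Prop :=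
  fun p q =>
    (∃ u v, G.Adj u v ∧ p = .orig u ∧ q = .orig v) ∨
    (∃ D, p = .gad D .t ∧ (q = .gad D .b1 ∨ q = .gad D .b2)) ∨
    (∃ D, p = .gad D .h ∧ (q = .gad D .b1 ∨ q = .gad D .b2)) ∨
    (∃ D, p = gadTail D ∧ q = .gad D .t) ∨
    (∃ D, p = gadHead D ∧ q = .gad D .h)

/-- The graph `H` constructed from `G` (with degree function `d`) and `ℓ`. -/
def graphH (G : SimpleGraph V) (ℓ : ℕ) (d : V → ℕ) : SimpleGraph (HVert V ℓ d) :=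
  SimpleGraph.fromRel (HRel G ℓ d)

/-- The threshold function `τ'` of `H`, where `n` is the number of vertices of `G`. -/
def tauH (τ : V → ℕ) (n ℓ : ℕ) (d : V → ℕ) : HVert V ℓ d → ℕ
  | .orig v => τ v
  | .xx _ => n
  | .yy _ => n
  | .aa _ _ => ℓ
  | .bb _ _ => ℓ
  | .gad _ .t => 1
  | .gad _ .b1 => 1
  | .gad _ .b2 => 1
  | .gad _ .h => 2

/-- The vertex set `X = {x₁, …, x_ℓ}` of `H`. -/
def XSet (V : Type*) (ℓ : ℕ) (d : V → ℕ) : Set (HVert V ℓ d) := Set.range HVert.xx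

/-- The vertex set `Y = {y₁, …, y_ℓ}` of `H`. -/
def YSet (V : Type*) (ℓ : ℕ) (d : V → ℕ) : Set (HVert V ℓ d) := Set.range HVert.yy

/-- The copy of `V` inside `V(H)`. -/
def OrigSet (V : Type*) (ℓ : ℕ) (d : V → ℕ) : Set (HVert V ℓ d) := Set.range HVert.orig

/-- The vertex set `A = {a_{v,j}}` of `H`. -/
def ASet (V : Type*) (ℓ : ℕ) (d : V → ℕ) : Set (HVert V ℓ d) :=
  { p | ∃ v j, p = HVert.aa v j }

/-- The vertex set `B = {b_{v,j}}` of `H`. -/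
def BSet (V : Type*) (ℓ : ℕ) (d : V → ℕ) : Set (HVert V ℓ d) :=
  { p | ∃ v j, p = HVert.bb v j }

section Aux

variable {W : Type*} [Finite W] {G : SimpleGraph W} {τ : W → ℕ} {S S' : Set W}

lemma activeAt_mono_nat (i j : ℕ) (hij : i ≤ j) : activeAt G τ S i ⊆ activeAt G τ S j := by
  induction j with
  | zero => simp_all
  | succ j ih =>
    rcases Nat.lt_or_ge i (j+1) with h | h
    · exact (ih (by omega)).trans (by intro x hx; exact Or.inl hx)
    · have : i = j + 1 := by omega
      subst this; exact subset_rfl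

lemma subset_activeSet : S ⊆ activeSet G τ S := fun x hx =>
  Set.mem_iUnion.2 ⟨0, hx⟩

lemma activeAt_subset_activeSet (i : ℕ) : activeAt G τ S i ⊆ activeSet G τ S := fun x hx =>
  Set.mem_iUnion.2 ⟨i, hx⟩

lemma activeAt_mono_set (h : S ⊆ S') (i : ℕ) : activeAt G τ S i ⊆ activeAt G τ S' i := by
  induction i with
  | zero => exact h
  | succ i ih =>
    intro x hx
    rcases hx with hx | hx
    · exact Or.inl (ih hx)
    · simp only [Set.mem_setOf_eq] at hx
      exact Or.inr (le_trans hx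
        (Set.ncard_le_ncard (Set.inter_subset_inter_right _ ih) (Set.toFinite _)))

lemma activeSet_mono_set (h : S ⊆ S') : activeSet G τ S ⊆ activeSet G τ S' := by
  intro x hx
  rcases Set.mem_iUnion.1 hx with ⟨i, hi⟩
  exact Set.mem_iUnion.2 ⟨i, activeAt_mono_set h i hi⟩

lemma IsTargetSet.mono (h : IsTargetSet G τ S) (hss : S ⊆ S') : IsTargetSet G τ S' :=
  Set.eq_univ_of_univ_subset (h ▸ activeSet_mono_set hss)

lemma exists_activeAt_superset (t : Set W) (ht : t ⊆ activeSet G τ S) :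
    ∃ i, t ⊆ activeAt G τ S i := by
  have hfin : t.Finite := Set.toFinite _
  refine Set.Finite.induction_on (motive := fun t _ => t ⊆ activeSet G τ S → ∃ i, t ⊆ activeAt G τ S i)
    t hfin (fun _ => ⟨0, by simp⟩) ?_ ht
  rintro a s - - ih ht
  rcases ih (fun x hx => ht (Set.mem_insert_of_mem _ hx)) with ⟨i, hi⟩
  rcases Set.mem_iUnion.1 (ht (Set.mem_insert _ _)) with ⟨j, hj⟩
  refine ⟨max i j, ?_⟩
  intro x hx
  rcases hx with rfl | hx
  · exact activeAt_mono_nat _ _ (le_max_right _ _) hj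
  · exact activeAt_mono_nat _ _ (le_max_left _ _) (hi hx)

lemma activeSet_closed {v : W}
    (h : τ v ≤ (G.neighborSet v ∩ activeSet G τ S).ncard) : v ∈ activeSet G τ S := by
  obtain ⟨i, hi⟩ := exists_activeAt_superset (G.neighborSet v ∩ activeSet G τ S)
    Set.inter_subset_right
  refine activeAt_subset_activeSet (i + 1) (Or.inr ?_)
  refine le_trans h (Set.ncard_le_ncard ?_ (Set.toFinite _))
  intro x hx
  exact ⟨hx.1, hi hx⟩

lemma card_le_ncard_of_inj {α : Type*}  [Finite α] (f : α → W) (hf : Function.Injective f)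
    (T : Set W) (hT : T.Finite) (h : ∀ a, f a ∈ T) : Nat.card α ≤ T.ncard := by
  have h1 : Set.range f ⊆ T := by rintro x ⟨a, rfl⟩; exact h a
  have h2 : (Set.range f).ncard = Nat.card α := by
    rw [← Nat.card_coe_set_eq, Nat.card_range_of_injective hf]
  calc Nat.card α = (Set.range f).ncard := h2.symm
    _ ≤ T.ncard := Set.ncard_le_ncard h1 hT

lemma mem_activeSet_of_nbrs {α : Type*} [Finite α] {v : W} (f : α → W)
    (hf : Function.Injective f) (hadj : ∀ a, f a ∈ G.neighborSet v ∩ activeSet G τ S)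
    (hτ : τ v ≤ Nat.card α) : v ∈ activeSet G τ S :=
  activeSet_closed (le_trans hτ (card_le_ncard_of_inj f hf _ (Set.toFinite _) hadj))

end Aux
section Compress

variable {W : Type*} [Finite W]

lemma compress : ∀ (T : ℕ) (F : ℕ → Set W),
    (∀ t < T, (symmDiff (F t) (F (t+1))).ncard ≤ 1) →
    ∃ (T' : ℕ) (F' : ℕ → Set W), F' 0 = F 0 ∧ F' T' = F T ∧ (∀ t ≤ T', ∃ s ≤ T, F' t = F s) ∧
      ∀ t < T', (symmDiff (F' t) (F' (t+1))).ncard = 1 := by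
  intro T
  induction T with
  | zero =>
    intro F _
    exact ⟨0, F, rfl, rfl, fun t ht => ⟨t, ht, rfl⟩, fun t ht => absurd ht (by omega)⟩
  | succ T ih =>
    intro F hF
    obtain ⟨T', F', h0, hT, hmem, hstep⟩ := ih (fun t => F (t+1))
      (fun t ht => hF (t+1) (by omega))
    by_cases heq : F 0 = F 1
    · refine ⟨T', F', by rw [h0, heq], hT, ?_, hstep⟩
      intro t ht
      obtain ⟨s, hs, hFs⟩ := hmem t ht
      exact ⟨s+1, by omega, hFs⟩
    · set G' : ℕ → Set W := fun t => if t = 0 then F 0 else F' (t-1) with hG'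
      have hG0 : G' 0 = F 0 := by simp [hG']
      have hGsucc : ∀ t, G' (t+1) = F' t := by intro t; simp [hG']
      refine ⟨T'+1, G', hG0, by rw [hGsucc]; exact hT, ?_, ?_⟩
      · intro t ht
        match t with
        | 0 => exact ⟨0, by omega, hG0⟩
        | t+1 =>
          obtain ⟨s, hs, hFs⟩ := hmem t (by omega)
          exact ⟨s+1, by omega, by rw [hGsucc]; exact hFs⟩
      · intro t ht
        match t with
        | 0 =>
          rw [hG0, hGsucc, h0]
          have h1 : (symmDiff (F 0) (F (0+1))).ncard ≤ 1 := hF 0 (by omega)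
          have h2 : (symmDiff (F 0) (F (0+1))).Nonempty := by
            rw [Set.nonempty_iff_ne_empty]
            intro hx
            exact heq (symmDiff_eq_bot.1 hx)
          have h3 := (Set.ncard_pos (Set.toFinite _)).2 h2
          omega
        | t+1 =>
          rw [hGsucc, hGsucc]
          exact hstep t (by omega)

lemma symmDiff_image_le {f : W → W} {S S' : Set W}
    (h : (symmDiff S S').ncard = 1) : (symmDiff (f '' S) (f '' S')).ncard ≤ 1 := by
  obtain ⟨a, ha⟩ := Set.ncard_eq_one.1 h
  have hsub : symmDiff (f '' S) (f '' S') ⊆ {f a} := by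
    intro x hx
    rcases hx with ⟨hx1, hx2⟩ | ⟨hx1, hx2⟩
    · obtain ⟨u, hu, rfl⟩ := hx1
      by_cases huS' : u ∈ S'
      · exact absurd (Set.mem_image_of_mem f huS') hx2
      · have : u ∈ symmDiff S S' := Or.inl ⟨hu, huS'⟩
        rw [ha] at this
        simp_all
    · obtain ⟨u, hu, rfl⟩ := hx1
      by_cases huS : u ∈ S
      · exact absurd (Set.mem_image_of_mem f huS) hx2
      · have : u ∈ symmDiff S S' := Or.inr ⟨hu, huS⟩
        rw [ha] at this
        simp_all
  calc (symmDiff (f '' S) (f '' S')).ncard ≤ ({f a} : Set W).ncard :=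
        Set.ncard_le_ncard hsub (Set.toFinite _)
    _ = 1 := Set.ncard_singleton _

end Compress
section HSpec

private def gvEnc : GadVert → Fin 4
  | .t => 0
  | .h => 1
  | .b1 => 2
  | .b2 => 3

instance : Finite GadVert := by
  apply Finite.of_injective gvEnc
  intro a b h
  cases a <;> cases b <;> simp_all [gvEnc]

private def giEnc : GadIdx V ℓ d →
    (V × Fin ℓ) ⊕ (Fin ℓ × Σ v : V, Fin (d v)) ⊕ (Σ v : V, Fin (d v)) ⊕
    (V × Fin ℓ) ⊕ (Fin ℓ × Σ v : V, Fin (d v)) ⊕ (Σ v : V, Fin (d v))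
  | .vx v i => .inl (v, i)
  | .xa i v j => .inr (.inl (i, ⟨v, j⟩))
  | .av v j => .inr (.inr (.inl ⟨v, j⟩))
  | .vy v i => .inr (.inr (.inr (.inl (v, i))))
  | .yb i v j => .inr (.inr (.inr (.inr (.inl (i, ⟨v, j⟩)))))
  | .bv v j => .inr (.inr (.inr (.inr (.inr ⟨v, j⟩))))

instance [Finite V] : Finite (GadIdx V ℓ d) := by
  apply Finite.of_injective giEnc
  intro a b h
  cases a <;> cases b <;> simp_all [giEnc]

private def hvEnc : HVert V ℓ d →
    V ⊕ (Fin ℓ) ⊕ (Fin ℓ) ⊕ (Σ v : V, Fin (d v)) ⊕ (Σ v : V, Fin (d v)) ⊕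
    (GadIdx V ℓ d × GadVert)
  | .orig v => .inl v
  | .xx i => .inr (.inl i)
  | .yy i => .inr (.inr (.inl i))
  | .aa v j => .inr (.inr (.inr (.inl ⟨v, j⟩)))
  | .bb v j => .inr (.inr (.inr (.inr (.inl ⟨v, j⟩))))
  | .gad D w => .inr (.inr (.inr (.inr (.inr (D, w)))))

instance [Finite V] : Finite (HVert V ℓ d) := by
  apply Finite.of_injective hvEnc
  intro a b h
  cases a <;> cases b <;> simp_all [hvEnc]

/-- The projection replacing gadget-internal vertices by the tail of their gadget. -/
def proj : HVert V ℓ d → HVert V ℓ d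
  | .gad D _ => gadTail D
  | u => u

lemma gadTail_ne_gad (D D' : GadIdx V ℓ d) (w : GadVert) : gadTail D ≠ .gad D' w := by
  cases D <;> simp [gadTail]

lemma gadHead_ne_gad (D D' : GadIdx V ℓ d) (w : GadVert) : gadHead D ≠ .gad D' w := by
  cases D <;> simp [gadHead]

variable (G : SimpleGraph V)

lemma adj_tail_t (D : GadIdx V ℓ d) : (graphH G ℓ d).Adj (gadTail D) (.gad D .t) := by
  rw [graphH, SimpleGraph.fromRel_adj]
  exact ⟨gadTail_ne_gad _ _ _, Or.inl (Or.inr (Or.inr (Or.inr (Or.inl ⟨D, rfl, rfl⟩))))⟩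

lemma adj_head_h (D : GadIdx V ℓ d) : (graphH G ℓ d).Adj (gadHead D) (.gad D .h) := by
  rw [graphH, SimpleGraph.fromRel_adj]
  exact ⟨gadHead_ne_gad _ _ _, Or.inl (Or.inr (Or.inr (Or.inr (Or.inr ⟨D, rfl, rfl⟩))))⟩

lemma adj_t_b1 (D : GadIdx V ℓ d) : (graphH G ℓ d).Adj (.gad D .t) (.gad D .b1) := by
  rw [graphH, SimpleGraph.fromRel_adj]
  exact ⟨by simp, Or.inl (Or.inr (Or.inl ⟨D, rfl, Or.inl rfl⟩))⟩

lemma adj_t_b2 (D : GadIdx V ℓ d) : (graphH G ℓ d).Adj (.gad D .t) (.gad D .b2) := by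
  rw [graphH, SimpleGraph.fromRel_adj]
  exact ⟨by simp, Or.inl (Or.inr (Or.inl ⟨D, rfl, Or.inr rfl⟩))⟩

lemma adj_h_b1 (D : GadIdx V ℓ d) : (graphH G ℓ d).Adj (.gad D .h) (.gad D .b1) := by
  rw [graphH, SimpleGraph.fromRel_adj]
  exact ⟨by simp, Or.inl (Or.inr (Or.inr (Or.inl ⟨D, rfl, Or.inl rfl⟩)))⟩

lemma adj_h_b2 (D : GadIdx V ℓ d) : (graphH G ℓ d).Adj (.gad D .h) (.gad D .b2) := by
  rw [graphH, SimpleGraph.fromRel_adj]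
  exact ⟨by simp, Or.inl (Or.inr (Or.inr (Or.inl ⟨D, rfl, Or.inr rfl⟩)))⟩

/-- Classification of the neighbors of a gadget-internal vertex. -/
lemma adj_gad (u : HVert V ℓ d) (D : GadIdx V ℓ d) (w : GadVert)
    (hadj : (graphH G ℓ d).Adj u (.gad D w)) :
    (u = gadTail D ∧ w = .t) ∨ (u = gadHead D ∧ w = .h) ∨ (∃ w', u = .gad D w') := by
  rw [graphH, SimpleGraph.fromRel_adj] at hadj
  obtain ⟨hne, h | h⟩ := hadj
  · rcases h with ⟨a, b, -, rfl, hq⟩ | ⟨D', rfl, hq | hq⟩ | ⟨D', rfl, hq | hq⟩ |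
      ⟨D', hp, hq⟩ | ⟨D', hp, hq⟩
    · exact absurd hq.symm (by simp)
    · obtain ⟨rfl, rfl⟩ : D' = D ∧ GadVert.b1 = w := by simpa [eq_comm] using hq
      exact Or.inr (Or.inr ⟨_, rfl⟩)
    · obtain ⟨rfl, rfl⟩ : D' = D ∧ GadVert.b2 = w := by simpa [eq_comm] using hq
      exact Or.inr (Or.inr ⟨_, rfl⟩)
    · obtain ⟨rfl, rfl⟩ : D' = D ∧ GadVert.b1 = w := by simpa [eq_comm] using hq
      exact Or.inr (Or.inr ⟨_, rfl⟩)
    · obtain ⟨rfl, rfl⟩ : D' = D ∧ GadVert.b2 = w := by simpa [eq_comm] using hq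
      exact Or.inr (Or.inr ⟨_, rfl⟩)
    · obtain ⟨rfl, rfl⟩ : D' = D ∧ GadVert.t = w := by simpa [eq_comm] using hq
      exact Or.inl ⟨hp, rfl⟩
    · obtain ⟨rfl, rfl⟩ : D' = D ∧ GadVert.h = w := by simpa [eq_comm] using hq
      exact Or.inr (Or.inl ⟨hp, rfl⟩)
  · rcases h with ⟨a, b, -, hp, rfl⟩ | ⟨D', hp, hq | hq⟩ | ⟨D', hp, hq | hq⟩ |
      ⟨D', hp, rfl⟩ | ⟨D', hp, rfl⟩
    · exact absurd hp (by simp)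
    · obtain ⟨rfl, rfl⟩ : D' = D ∧ GadVert.t = w := by simpa [eq_comm] using hp
      rcases hq with rfl | rfl <;> exact Or.inr (Or.inr ⟨_, rfl⟩)
    · obtain ⟨rfl, rfl⟩ : D' = D ∧ GadVert.t = w := by simpa [eq_comm] using hp
      rcases hq with rfl | rfl <;> exact Or.inr (Or.inr ⟨_, rfl⟩)
    · obtain ⟨rfl, rfl⟩ : D' = D ∧ GadVert.h = w := by simpa [eq_comm] using hp
      rcases hq with rfl | rfl <;> exact Or.inr (Or.inr ⟨_, rfl⟩)
    · obtain ⟨rfl, rfl⟩ : D' = D ∧ GadVert.h = w := by simpa [eq_comm] using hp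
      rcases hq with rfl | rfl <;> exact Or.inr (Or.inr ⟨_, rfl⟩)
    · exact absurd hp (gadTail_ne_gad _ _ _).symm
    · exact absurd hp (gadHead_ne_gad _ _ _).symm

end HSpec
section HSpec2

variable [Finite V] (G : SimpleGraph V) (τ : V → ℕ) (n : ℕ) {ℓ : ℕ} {d : V → ℕ}

/-- If the tail of a gadget is active, then all of its internal vertices are active. -/
lemma gadget_active {Q : Set (HVert V ℓ d)} (D : GadIdx V ℓ d)
    (hQ : gadTail D ∈ activeSet (graphH G ℓ d) (tauH τ n ℓ d) Q) :
    ∀ w, HVert.gad D w ∈ activeSet (graphH G ℓ d) (tauH τ n ℓ d) Q := by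
  set H := graphH G ℓ d
  set τ' := tauH τ n ℓ d with hτ'
  have ht : HVert.gad D .t ∈ activeSet H τ' Q := by
    refine mem_activeSet_of_nbrs (α := Unit) (fun _ => gadTail D) (fun _ _ _ => rfl) ?_ ?_
    · exact fun _ => ⟨(adj_tail_t G D).symm, hQ⟩
    · simp [hτ', tauH]
  have hb1 : HVert.gad D .b1 ∈ activeSet H τ' Q := by
    refine mem_activeSet_of_nbrs (α := Unit) (fun _ => HVert.gad D .t) (fun _ _ _ => rfl) ?_ ?_
    · exact fun _ => ⟨(adj_t_b1 G D).symm, ht⟩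
    · simp [hτ', tauH]
  have hb2 : HVert.gad D .b2 ∈ activeSet H τ' Q := by
    refine mem_activeSet_of_nbrs (α := Unit) (fun _ => HVert.gad D .t) (fun _ _ _ => rfl) ?_ ?_
    · exact fun _ => ⟨(adj_t_b2 G D).symm, ht⟩
    · simp [hτ', tauH]
  have hh : HVert.gad D .h ∈ activeSet H τ' Q := by
    refine mem_activeSet_of_nbrs (α := Bool)
      (fun b => if b then HVert.gad D .b1 else HVert.gad D .b2) ?_ ?_ ?_
    · intro a b hab
      cases a <;> cases b <;> simp_all
    · intro a
      cases a
      · exact ⟨adj_h_b2 G D, hb2⟩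
      · exact ⟨adj_h_b1 G D, hb1⟩
    · simp [hτ', tauH, Nat.card_eq_fintype_card]
  intro w
  cases w
  · exact ht
  · exact hh
  · exact hb1
  · exact hb2

/-- The key replacement lemma: the projection of a target set is a target set. -/
lemma proj_target {S : Set (HVert V ℓ d)}
    (hS : IsTargetSet (graphH G ℓ d) (tauH τ n ℓ d) S) :
    IsTargetSet (graphH G ℓ d) (tauH τ n ℓ d) (proj '' S) := by
  set H := graphH G ℓ d with hH
  set τ' := tauH τ n ℓ d with hτ'
  set A' := activeSet H τ' (proj '' S) with hA'
  set M : Set (HVert V ℓ d) :=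
    A' ∪ {u | ∃ D w w', u = HVert.gad D w ∧ HVert.gad D w' ∈ S} with hM
  have key : ∀ i, activeAt H τ' S i ⊆ M := by
    intro i
    induction i with
    | zero =>
      intro u hu
      match u with
      | .gad D w => exact Or.inr ⟨D, w, w, rfl, hu⟩
      | .orig v => exact Or.inl (subset_activeSet ⟨_, hu, rfl⟩)
      | .xx i => exact Or.inl (subset_activeSet ⟨_, hu, rfl⟩)
      | .yy i => exact Or.inl (subset_activeSet ⟨_, hu, rfl⟩)
      | .aa v j => exact Or.inl (subset_activeSet ⟨_, hu, rfl⟩)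
      | .bb v j => exact Or.inl (subset_activeSet ⟨_, hu, rfl⟩)
    | succ i ih =>
      intro u hu
      rcases hu with hu | hu
      · exact ih hu
      · simp only [Set.mem_setOf_eq] at hu
        by_cases hu1 : ∃ D w', u = gadTail D ∧ HVert.gad D w' ∈ S
        · obtain ⟨D, w', rfl, hw'⟩ := hu1
          exact Or.inl (subset_activeSet ⟨HVert.gad D w', hw', rfl⟩)
        · by_cases hu2 : ∃ D w, u = HVert.gad D w
          · obtain ⟨D, w, rfl⟩ := hu2
            by_cases hDS : ∃ w', HVert.gad D w' ∈ S
            · obtain ⟨w', hw'⟩ := hDS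
              exact Or.inr ⟨D, w, w', rfl, hw'⟩
            · left
              apply activeSet_closed
              refine le_trans hu (Set.ncard_le_ncard ?_ (Set.toFinite _))
              rintro z ⟨hz1, hz2⟩
              refine ⟨hz1, ?_⟩
              rcases ih hz2 with hz | ⟨D₂, w₂, w₃, rfl, hw₃⟩
              · exact hz
              · rcases adj_gad G _ _ _ ((H.mem_neighborSet _ _).1 hz1) with
                  ⟨h1, -⟩ | ⟨h1, -⟩ | ⟨w'', h1⟩
                · exact absurd h1.symm (gadTail_ne_gad _ _ _)
                · exact absurd h1.symm (gadHead_ne_gad _ _ _)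
                · obtain ⟨rfl, -⟩ : D = D₂ ∧ w = w'' := by simpa using h1
                  exact absurd ⟨w₃, hw₃⟩ hDS
          · left
            apply activeSet_closed
            refine le_trans hu (Set.ncard_le_ncard ?_ (Set.toFinite _))
            rintro z ⟨hz1, hz2⟩
            refine ⟨hz1, ?_⟩
            rcases ih hz2 with hz | ⟨D₂, w₂, w₃, rfl, hw₃⟩
            · exact hz
            · rcases adj_gad G _ _ _ ((H.mem_neighborSet _ _).1 hz1) with
                ⟨h1, rfl⟩ | ⟨h1, rfl⟩ | ⟨w'', h1⟩
              · exact absurd ⟨D₂, w₃, h1, hw₃⟩ hu1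
              · have htl : gadTail D₂ ∈ A' :=
                  subset_activeSet ⟨HVert.gad D₂ w₃, hw₃, rfl⟩
                exact gadget_active G τ n D₂ htl .h
              · exact absurd ⟨D₂, w'', h1⟩ hu2
  have hnon : ∀ u : HVert V ℓ d, (∀ D w, u ≠ HVert.gad D w) → u ∈ A' := by
    intro u hng
    have hu : u ∈ activeSet H τ' S := hS ▸ Set.mem_univ u
    obtain ⟨i, hi⟩ := Set.mem_iUnion.1 hu
    rcases key i hi with h | ⟨D, w, w', rfl, -⟩
    · exact h
    · exact absurd rfl (hng D w)
  rw [IsTargetSet, Set.eq_univ_iff_forall]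
  intro u
  match u with
  | .orig v => exact hnon _ (by simp)
  | .xx i => exact hnon _ (by simp)
  | .yy i => exact hnon _ (by simp)
  | .aa v j => exact hnon _ (by simp)
  | .bb v j => exact hnon _ (by simp)
  | .gad D w =>
    exact gadget_active G τ n D (hnon (gadTail D) (fun _ _ => gadTail_ne_gad _ _ _)) w

end HSpec2
section HSpec3

variable [Finite V] (G : SimpleGraph V) (τ : V → ℕ) (n : ℕ) {ℓ : ℕ} {d : V → ℕ}
  {Q : Set (HVert V ℓ d)}

lemma aa_active (hx : ∀ i, HVert.xx i ∈ activeSet (graphH G ℓ d) (tauH τ n ℓ d) Q) :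
    ∀ (v : V) (j : Fin (d v)), HVert.aa v j ∈ activeSet (graphH G ℓ d) (tauH τ n ℓ d) Q := by
  intro v j
  refine mem_activeSet_of_nbrs (α := Fin ℓ) (fun i => HVert.gad (.xa i v j) .h) ?_ ?_ ?_
  · intro a b hab; simpa using hab
  · intro i
    exact ⟨adj_head_h G (.xa i v j), gadget_active G τ n (.xa i v j) (hx i) .h⟩
  · simp [tauH, Nat.card_eq_fintype_card]

lemma bb_active (hy : ∀ i, HVert.yy i ∈ activeSet (graphH G ℓ d) (tauH τ n ℓ d) Q) :
    ∀ (v : V) (j : Fin (d v)), HVert.bb v j ∈ activeSet (graphH G ℓ d) (tauH τ n ℓ d) Q := by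
  intro v j
  refine mem_activeSet_of_nbrs (α := Fin ℓ) (fun i => HVert.gad (.yb i v j) .h) ?_ ?_ ?_
  · intro a b hab; simpa using hab
  · intro i
    exact ⟨adj_head_h G (.yb i v j), gadget_active G τ n (.yb i v j) (hy i) .h⟩
  · simp [tauH, Nat.card_eq_fintype_card]

lemma orig_active_of_aa (hτd : ∀ v, τ v ≤ d v)
    (ha : ∀ (v : V) (j : Fin (d v)), HVert.aa v j ∈ activeSet (graphH G ℓ d) (tauH τ n ℓ d) Q) :
    ∀ v : V, HVert.orig v ∈ activeSet (graphH G ℓ d) (tauH τ n ℓ d) Q := by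
  intro v
  refine mem_activeSet_of_nbrs (α := Fin (d v)) (fun j => HVert.gad (.av v j) .h) ?_ ?_ ?_
  · intro a b hab; simpa using hab
  · intro j
    exact ⟨adj_head_h G (.av v j), gadget_active G τ n (.av v j) (ha v j) .h⟩
  · simp only [tauH, Nat.card_eq_fintype_card, Fintype.card_fin]
    exact hτd v

lemma orig_active_of_bb (hτd : ∀ v, τ v ≤ d v)
    (hb : ∀ (v : V) (j : Fin (d v)), HVert.bb v j ∈ activeSet (graphH G ℓ d) (tauH τ n ℓ d) Q) :
    ∀ v : V, HVert.orig v ∈ activeSet (graphH G ℓ d) (tauH τ n ℓ d) Q := by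
  intro v
  refine mem_activeSet_of_nbrs (α := Fin (d v)) (fun j => HVert.gad (.bv v j) .h) ?_ ?_ ?_
  · intro a b hab; simpa using hab
  · intro j
    exact ⟨adj_head_h G (.bv v j), gadget_active G τ n (.bv v j) (hb v j) .h⟩
  · simp only [tauH, Nat.card_eq_fintype_card, Fintype.card_fin]
    exact hτd v

lemma target_of_orig (hn : n ≤ Nat.card V) (hτd : ∀ v, τ v ≤ d v)
    (horig : ∀ v : V, HVert.orig v ∈ activeSet (graphH G ℓ d) (tauH τ n ℓ d) Q) :
    IsTargetSet (graphH G ℓ d) (tauH τ n ℓ d) Q := by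
  have hx : ∀ i, HVert.xx i ∈ activeSet (graphH G ℓ d) (tauH τ n ℓ d) Q := by
    intro i
    refine mem_activeSet_of_nbrs (α := V) (fun v => HVert.gad (.vx v i) .h) ?_ ?_ ?_
    · intro a b hab; simpa using hab
    · intro v
      exact ⟨adj_head_h G (.vx v i), gadget_active G τ n (.vx v i) (horig v) .h⟩
    · simpa [tauH] using hn
  have hy : ∀ i, HVert.yy i ∈ activeSet (graphH G ℓ d) (tauH τ n ℓ d) Q := by
    intro i
    refine mem_activeSet_of_nbrs (α := V) (fun v => HVert.gad (.vy v i) .h) ?_ ?_ ?_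
    · intro a b hab; simpa using hab
    · intro v
      exact ⟨adj_head_h G (.vy v i), gadget_active G τ n (.vy v i) (horig v) .h⟩
    · simpa [tauH] using hn
  have ha := aa_active G τ n hx
  have hb := bb_active G τ n hy
  rw [IsTargetSet, Set.eq_univ_iff_forall]
  intro u
  match u with
  | .orig v => exact horig v
  | .xx i => exact hx i
  | .yy i => exact hy i
  | .aa v j => exact ha v j
  | .bb v j => exact hb v j
  | .gad D w =>
    refine gadget_active G τ n D ?_ w
    match D with
    | .vx v i => exact horig v
    | .xa i v j => exact hx i
    | .av v j => exact ha v j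
    | .vy v i => exact horig v
    | .yb i v j => exact hy i
    | .bv v j => exact hb v j

lemma target_of_X (hn : n ≤ Nat.card V) (hτd : ∀ v, τ v ≤ d v)
    (hX : XSet V ℓ d ⊆ Q) : IsTargetSet (graphH G ℓ d) (tauH τ n ℓ d) Q := by
  refine target_of_orig G τ n hn hτd ?_
  refine orig_active_of_aa G τ n hτd (aa_active G τ n ?_)
  exact fun i => subset_activeSet (hX ⟨i, rfl⟩)

lemma target_of_Y (hn : n ≤ Nat.card V) (hτd : ∀ v, τ v ≤ d v)
    (hY : YSet V ℓ d ⊆ Q) : IsTargetSet (graphH G ℓ d) (tauH τ n ℓ d) Q := by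
  refine target_of_orig G τ n hn hτd ?_
  refine orig_active_of_bb G τ n hτd (bb_active G τ n ?_)
  exact fun i => subset_activeSet (hY ⟨i, rfl⟩)

end HSpec3
section HSpec4

variable {ℓ : ℕ} {d : V → ℕ}

/-- The explicit sequence from `X` to `Y`: first add the `y`'s, then remove the `x`'s. -/
def seq0 (V : Type*) (ℓ : ℕ) (d : V → ℕ) (t : ℕ) : Set (HVert V ℓ d) :=
  {p | ∃ i : Fin ℓ, p = .xx i ∧ t ≤ ℓ + (i : ℕ)} ∪ {p | ∃ i : Fin ℓ, p = .yy i ∧ (i : ℕ) < t}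

lemma seq0_zero : seq0 V ℓ d 0 = XSet V ℓ d := by
  ext p
  simp [seq0, XSet, eq_comm]

lemma seq0_last : seq0 V ℓ d (2 * ℓ) = YSet V ℓ d := by
  ext p
  simp only [seq0, YSet, Set.mem_union, Set.mem_setOf_eq, Set.mem_range]
  constructor
  · rintro (⟨i, rfl, hi⟩ | ⟨i, rfl, hi⟩)
    · exact absurd hi (by have := i.isLt; omega)
    · exact ⟨i, rfl⟩
  · rintro ⟨i, rfl⟩
    exact Or.inr ⟨i, rfl, by have := i.isLt; omega⟩

lemma seq0_supX {t : ℕ} (ht : t ≤ ℓ) : XSet V ℓ d ⊆ seq0 V ℓ d t := by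
  rintro p ⟨i, rfl⟩
  exact Or.inl ⟨i, rfl, by omega⟩

lemma seq0_supY {t : ℕ} (ht : ℓ ≤ t) : YSet V ℓ d ⊆ seq0 V ℓ d t := by
  rintro p ⟨i, rfl⟩
  exact Or.inr ⟨i, rfl, by have := i.isLt; omega⟩

lemma seq0_nongad (t : ℕ) (D : GadIdx V ℓ d) (w : GadVert) : HVert.gad D w ∉ seq0 V ℓ d t := by
  rintro (⟨i, h, -⟩ | ⟨i, h, -⟩) <;> simp at h

lemma seq0_step {t : ℕ} (ht : t < 2 * ℓ) :
    (symmDiff (seq0 V ℓ d t) (seq0 V ℓ d (t + 1))).ncard = 1 := by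
  rcases Nat.lt_or_ge t ℓ with h1 | h1
  · have : symmDiff (seq0 V ℓ d t) (seq0 V ℓ d (t + 1)) = {HVert.yy ⟨t, h1⟩} := by
      ext p
      simp only [Set.mem_symmDiff, seq0, Set.mem_union, Set.mem_setOf_eq, Set.mem_singleton_iff]
      constructor
      · rintro (⟨hin, hout⟩ | ⟨hin, hout⟩)
        · rcases hin with ⟨i', rfl, hi⟩ | ⟨i', rfl, hi⟩
          · exact absurd (Or.inl ⟨i', rfl, by omega⟩) hout
          · exact absurd (Or.inr ⟨i', rfl, by omega⟩) hout
        · rcases hin with ⟨i', rfl, hi⟩ | ⟨i', rfl, hi⟩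
          · exact absurd (Or.inl ⟨i', rfl, by omega⟩) hout
          · have hni : ¬ ((i' : ℕ) < t) := fun hc => hout (Or.inr ⟨i', rfl, hc⟩)
            have hit : (i' : ℕ) = t := by omega
            simp [Fin.ext_iff, hit]
      · rintro rfl
        refine Or.inr ⟨Or.inr ⟨_, rfl, by simp⟩, ?_⟩
        rintro (⟨i', heq', -⟩ | ⟨i', heq', hi'⟩)
        · exact absurd heq' (by simp)
        · obtain rfl : i' = ⟨t, h1⟩ := by simpa [eq_comm] using heq'
          have hv : ((⟨t, h1⟩ : Fin ℓ) : ℕ) = t := rfl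
          omega
    rw [this, Set.ncard_singleton]
  · have h2 : t - ℓ < ℓ := by omega
    have : symmDiff (seq0 V ℓ d t) (seq0 V ℓ d (t + 1)) = {HVert.xx ⟨t - ℓ, h2⟩} := by
      ext p
      simp only [Set.mem_symmDiff, seq0, Set.mem_union, Set.mem_setOf_eq, Set.mem_singleton_iff]
      constructor
      · rintro (⟨hin, hout⟩ | ⟨hin, hout⟩)
        · rcases hin with ⟨i', rfl, hi⟩ | ⟨i', rfl, hi⟩
          · have hni : ¬ (t + 1 ≤ ℓ + (i' : ℕ)) := fun hc => hout (Or.inl ⟨i', rfl, hc⟩)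
            have hit : (i' : ℕ) = t - ℓ := by omega
            simp [Fin.ext_iff, hit]
          · exact absurd (Or.inr ⟨i', rfl, by omega⟩) hout
        · rcases hin with ⟨i', rfl, hi⟩ | ⟨i', rfl, hi⟩
          · exact absurd (Or.inl ⟨i', rfl, by omega⟩) hout
          · exact absurd (Or.inr ⟨i', rfl, by have := i'.isLt; omega⟩) hout
      · rintro rfl
        have hv : ((⟨t - ℓ, h2⟩ : Fin ℓ) : ℕ) = t - ℓ := rfl
        refine Or.inl ⟨Or.inl ⟨_, rfl, by omega⟩, ?_⟩
        rintro (⟨i', heq', hi'⟩ | ⟨i', heq', -⟩)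
        · obtain rfl : i' = ⟨t - ℓ, h2⟩ := by simpa [eq_comm] using heq'
          omega
        · exact absurd heq' (by simp)
    rw [this, Set.ncard_singleton]

end HSpec4
section HSpec5

variable {ℓ : ℕ} {d : V → ℕ}

lemma proj_mem (u : HVert V ℓ d) :
    proj u ∈ OrigSet V ℓ d ∪ XSet V ℓ d ∪ YSet V ℓ d ∪ ASet V ℓ d ∪ BSet V ℓ d := by
  match u with
  | .orig v => exact Or.inl (Or.inl (Or.inl (Or.inl ⟨v, rfl⟩)))
  | .xx i => exact Or.inl (Or.inl (Or.inl (Or.inr ⟨i, rfl⟩)))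
  | .yy i => exact Or.inl (Or.inl (Or.inr ⟨i, rfl⟩))
  | .aa v j => exact Or.inl (Or.inr ⟨v, j, rfl⟩)
  | .bb v j => exact Or.inr ⟨v, j, rfl⟩
  | .gad D w =>
    match D with
    | .vx v i => exact Or.inl (Or.inl (Or.inl (Or.inl ⟨v, rfl⟩)))
    | .xa i v j => exact Or.inl (Or.inl (Or.inl (Or.inr ⟨i, rfl⟩)))
    | .av v j => exact Or.inl (Or.inr ⟨v, j, rfl⟩)
    | .vy v i => exact Or.inl (Or.inl (Or.inl (Or.inl ⟨v, rfl⟩)))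
    | .yb i v j => exact Or.inl (Or.inl (Or.inr ⟨i, rfl⟩))
    | .bv v j => exact Or.inr ⟨v, j, rfl⟩

lemma proj_ne_gad (u : HVert V ℓ d) (D : GadIdx V ℓ d) (w : GadVert) :
    proj u ≠ HVert.gad D w := by
  match u with
  | .orig v => simp [proj]
  | .xx i => simp [proj]
  | .yy i => simp [proj]
  | .aa v j => simp [proj]
  | .bb v j => simp [proj]
  | .gad D' w' => exact gadTail_ne_gad _ _ _

lemma proj_image_X : proj '' XSet V ℓ d = XSet V ℓ d := by
  have h : ∀ p ∈ XSet V ℓ d, proj p = id p := by rintro p ⟨i, rfl⟩; rfl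
  rw [Set.image_congr h, Set.image_id]

lemma proj_image_Y : proj '' YSet V ℓ d = YSet V ℓ d := by
  have h : ∀ p ∈ YSet V ℓ d, proj p = id p := by rintro p ⟨i, rfl⟩; rfl
  rw [Set.image_congr h, Set.image_id]

end HSpec5

end TSS

open TSS in
/-- There is an optimal reconfiguration sequence from `X` to `Y` in `H` consisting only of
subsets of `V ∪ X ∪ Y ∪ A ∪ B`; in particular, none of its target sets contains any internal
vertex of the one-way gadgets of `H`. -/
theorem stmt8 {V : Type*} [Fintype V] (G : SimpleGraph V) [DecidableRel G.Adj] (τ : V → ℕ)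
    (ℓ : ℕ) (hℓ : 1 ≤ ℓ) (hiso : ∀ v : V, 0 < G.degree v) (hτ : ∀ v : V, τ v ≤ G.degree v) :
    ∃ T Sfam,
      IsReconfSeq (graphH G ℓ (fun v => G.degree v)) (tauH τ (Fintype.card V) ℓ (fun v => G.degree v))
        (XSet V ℓ (fun v => G.degree v)) (YSet V ℓ (fun v => G.degree v)) T Sfam ∧
      (∀ t ≤ T, Sfam t ⊆
        OrigSet V ℓ (fun v => G.degree v) ∪ XSet V ℓ (fun v => G.degree v) ∪ YSet V ℓ (fun v => G.degree v) ∪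
          ASet V ℓ (fun v => G.degree v) ∪ BSet V ℓ (fun v => G.degree v)) ∧
      (∀ t ≤ T, ∀ (D : GadIdx V ℓ (fun v => G.degree v)) (w : GadVert), HVert.gad D w ∉ Sfam t) ∧
      seqSize T Sfam = optReconf (graphH G ℓ (fun v => G.degree v)) (tauH τ (Fintype.card V) ℓ (fun v => G.degree v))
        (XSet V ℓ (fun v => G.degree v)) (YSet V ℓ (fun v => G.degree v)) := by
  classical
  set d : V → ℕ := fun v => G.degree v with hd
  set H := graphH G ℓ d with hH
  set τ' := tauH τ (Fintype.card V) ℓ d with hτ'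
  set XS := XSet V ℓ d with hXS
  set YS := YSet V ℓ d with hYS
  have hn : Fintype.card V ≤ Nat.card V := le_of_eq Nat.card_eq_fintype_card.symm
  have hτd : ∀ v, τ v ≤ d v := hτ
  -- the explicit sequence shows the set of sizes is nonempty
  have hrs0 : IsReconfSeq H τ' XS YS (2 * ℓ) (seq0 V ℓ d) := by
    refine ⟨seq0_zero, seq0_last, ?_, fun t htlt => seq0_step htlt⟩
    intro t htle
    rcases le_or_gt t ℓ with h | h
    · exact target_of_X G τ _ hn hτd (seq0_supX h)
    · exact target_of_Y G τ _ hn hτd (seq0_supY h.le)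
  have hne : {m | ∃ T Sfam, IsReconfSeq H τ' XS YS T Sfam ∧ seqSize T Sfam = m}.Nonempty :=
    ⟨seqSize (2 * ℓ) (seq0 V ℓ d), 2 * ℓ, seq0 V ℓ d, hrs0, rfl⟩
  have hmem0 := Nat.sInf_mem hne
  obtain ⟨T, Sfam, hrs, hsize⟩ := hmem0
  -- project the optimal sequence
  set F : ℕ → Set (HVert V ℓ d) := fun t => proj '' (Sfam t) with hF
  have hF0 : F 0 = XS := by rw [hF]; simp only; rw [hrs.head]; exact proj_image_X
  have hFT : F T = YS := by rw [hF]; simp only; rw [hrs.last]; exact proj_image_Y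
  obtain ⟨T', F', h0, hT, hmem, hstep⟩ :=
    compress T F (fun t htl => symmDiff_image_le (hrs.step t htl))
  have hrs' : IsReconfSeq H τ' XS YS T' F' := by
    refine ⟨h0.trans hF0, hT.trans hFT, ?_, hstep⟩
    intro t htl
    obtain ⟨s, hs, hFs⟩ := hmem t htl
    rw [hFs]
    exact proj_target G τ _ (hrs.target s hs)
  have hle1 : seqSize T' F' ≤ seqSize T Sfam := by
    apply Finset.sup_le
    intro t htmem
    obtain ⟨s, hs, hFs⟩ := hmem t (Nat.lt_succ_iff.1 (Finset.mem_range.1 htmem))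
    rw [hFs, hF]
    calc (proj '' Sfam s).ncard ≤ (Sfam s).ncard := Set.ncard_image_le (Set.toFinite _)
      _ ≤ seqSize T Sfam := by
        rw [seqSize]
        exact Finset.le_sup (f := fun t => (Sfam t).ncard) (Finset.mem_range.2 (Nat.lt_succ_of_le hs))
  have hle2 : optReconf H τ' XS YS ≤ seqSize T' F' :=
    Nat.sInf_le ⟨T', F', hrs', rfl⟩
  refine ⟨T', F', hrs', ?_, ?_, le_antisymm (hle1.trans (le_of_eq hsize)) hle2⟩
  · intro t htl p hp
    obtain ⟨s, hs, hFs⟩ := hmem t htl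
    rw [hFs, hF] at hp
    obtain ⟨u, -, rfl⟩ := hp
    exact proj_mem u
  · intro t htl D w hpmem
    obtain ⟨s, hs, hFs⟩ := hmem t htl
    rw [hFs, hF] at hpmem
    obtain ⟨u, -, hu⟩ := hpmem
    exact proj_ne_gad u D w hu
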